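/- Let Ω and Ψ be nonscalar conjugacy classes of SL(4,3), the special linear group of 4 × 4 matrices of determinant 1 over the field with 3 elements. Then tr(ΩΨ) = { tr(ωψ) : ω ∈ Ω, ψ ∈ Ψ } equals GF(3). -/

import Mathlib

open Matrix

abbrev F3 := ZMod 3
abbrev M4 := Matrix (Fin 4) (Fin 4) F3
abbrev SL4 := Matrix.SpecialLinearGroup (Fin 4) (ZMod 3)

def E (i j : Fin 4) : M4 := Matrix.single i j (1:F3)

def det4 (M : M4) : F3 :=
  M 0 0 * (M 1 1*(M 2 2*M 3 3 - M 2 3*M 3 2) - M 1 2*(M 2 1*M 3 3 - M 2 3*M 3 1) + M 1 3*(M 2 1*M 3 2 - M 2 2*M 3 1))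
  - M 0 1 * (M 1 0*(M 2 2*M 3 3 - M 2 3*M 3 2) - M 1 2*(M 2 0*M 3 3 - M 2 3*M 3 0) + M 1 3*(M 2 0*M 3 2 - M 2 2*M 3 0))
  + M 0 2 * (M 1 0*(M 2 1*M 3 3 - M 2 3*M 3 1) - M 1 1*(M 2 0*M 3 3 - M 2 3*M 3 0) + M 1 3*(M 2 0*M 3 1 - M 2 1*M 3 0))
  - M 0 3 * (M 1 0*(M 2 1*M 3 2 - M 2 2*M 3 1) - M 1 1*(M 2 0*M 3 2 - M 2 2*M 3 0) + M 1 2*(M 2 0*M 3 1 - M 2 1*M 3 0))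

lemma det4_eq (M : M4) : M.det = det4 M := by
  have h1 : (Fin.succ (2:Fin 3)) = (3:Fin 4) := rfl
  have h2 : (Fin.castSucc (2:Fin 3)) = (2:Fin 4) := rfl
  simp [Matrix.det_succ_row_zero, Fin.sum_univ_succ, det4, Fin.succAbove]
  ring

def colsM (v w : Fin 4 → F3) (k l : Fin 4) : M4 :=
  Matrix.of fun i r =>
    if r = 0 then v i else if r = 1 then w i
    else if r = 2 then (if i = k then 1 else 0) else (if i = l then 1 else 0)

set_option maxRecDepth 100000 in
set_option maxHeartbeats 1600000 in
lemma L_D1s : ∀ v0 v1 v2 v3 w0 w1 w2 w3 : F3,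
    (∀ c d : F3, (c*v0 + d*w0 = 0 ∧ c*v1 + d*w1 = 0 ∧ c*v2 + d*w2 = 0 ∧ c*v3 + d*w3 = 0)
      → c = 0 ∧ d = 0) →
    ((v0*w1 - v1*w0 ≠ 0) ∨ (v0*w2 - v2*w0 ≠ 0) ∨ (v0*w3 - v3*w0 ≠ 0) ∨
     (v1*w2 - v2*w1 ≠ 0) ∨ (v1*w3 - v3*w1 ≠ 0) ∨ (v2*w3 - v3*w2 ≠ 0)) := by
  decide

lemma E_mul_E_self : ∀ i j : Fin 4, i ≠ j → E i j * E i j = 0 := by decide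
lemma E02_mul_E02 : E 0 2 * E 0 2 = 0 := E_mul_E_self 0 2 (by decide)
lemma det_one_add_E : ∀ i j : Fin 4, i ≠ j → ((1:M4) + E i j).det = 1 := by decide
lemma det_one_sub_E : ∀ i j : Fin 4, i ≠ j → ((1:M4) - E i j).det = 1 := by decide

lemma E_mul_apply (i j : Fin 4) (B : M4) (a b : Fin 4) :
    (E i j * B) a b = if i = a then B j b else 0 := by
  rcases eq_or_ne i a with rfl | h
  · simp [E]
  · simp [E, Ne.symm h, h]

lemma mul_E_apply (i j : Fin 4) (B : M4) (a b : Fin 4) :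
    (B * E i j) a b = if j = b then B a i else 0 := by
  rcases eq_or_ne j b with rfl | h
  · simp [E]
  · simp [E, Ne.symm h, h]

lemma EBE (i j : Fin 4) (B : M4) : E i j * B * E i j = B j i • E i j := by
  ext a b
  rw [mul_E_apply, E_mul_apply]
  simp only [Matrix.smul_apply, E, Matrix.single, of_apply, smul_eq_mul]
  by_cases h1 : i = a <;> by_cases h2 : j = b <;> simp [h1, h2]

lemma trace_E02_mul (M : M4) : ((E 0 2) * M).trace = M 2 0 := by
  simp [Matrix.trace, Matrix.diag, E_mul_apply, Fin.sum_univ_four]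

lemma EcommB_diag (i : Fin 4) (B : M4) (hoff : ∀ a b : Fin 4, a ≠ b → B a b = 0) :
    E i 0 * B - B * E i 0 = (B 0 0 - B i i) • E i 0 := by
  ext a b
  rw [Matrix.sub_apply, mul_E_apply, E_mul_apply]
  simp only [Matrix.smul_apply, E, Matrix.single, of_apply, smul_eq_mul]
  rcases eq_or_ne i a with rfl | h1 <;> rcases eq_or_ne (0:Fin 4) b with rfl | h2
  · simp
  · simp [h2, Ne.symm h2, hoff 0 b h2]
  · simp [h1, Ne.symm h1, hoff a i (Ne.symm h1)]
  · simp [h1, h2, Ne.symm h2]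

lemma SL_inv_val (x : SL4) (gi : M4) (hgi : (x : M4) * gi = 1) (hdet : gi.det = 1) :
    ((x⁻¹ : SL4) : M4) = gi := by
  have : x⁻¹ = ⟨gi, hdet⟩ := by
    apply inv_eq_of_mul_eq_one_right
    apply Subtype.ext
    exact hgi
  rw [this]

def Sspan (B : M4) : Submodule F3 M4 :=
  Submodule.span F3 {X | ∃ h : SL4, X = (h : M4) * B * ((h⁻¹ : SL4) : M4)}

lemma conj_mem_Sspan (B : M4) (h : SL4) : (h : M4) * B * ((h⁻¹:SL4) : M4) ∈ Sspan B :=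
  Submodule.subset_span ⟨h, rfl⟩

lemma self_mem_Sspan (B : M4) : B ∈ Sspan B := by
  have := conj_mem_Sspan B 1
  simpa using this

lemma Sspan_conj_inv (B : M4) (X : M4) (hX : X ∈ Sspan B) (g : SL4) :
    (g : M4) * X * ((g⁻¹:SL4) : M4) ∈ Sspan B := by
  induction hX using Submodule.span_induction with
  | mem x hx =>
      obtain ⟨k, rfl⟩ := hx
      have h1 := conj_mem_Sspan B (g * k)
      rw [_root_.mul_inv_rev] at h1
      rw [Matrix.SpecialLinearGroup.coe_mul, Matrix.SpecialLinearGroup.coe_mul] at h1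
      have e : (g:M4) * ((k:M4) * B * ((k⁻¹:SL4):M4)) * ((g⁻¹:SL4):M4)
          = (g:M4) * (k:M4) * B * (((k⁻¹:SL4):M4) * ((g⁻¹:SL4):M4)) := by noncomm_ring
      rw [e]; exact h1
  | zero => simp
  | add x y _ _ hx hy => rw [mul_add, add_mul]; exact (Sspan B).add_mem hx hy
  | smul c x _ hx => rw [mul_smul_comm, smul_mul_assoc]; exact (Sspan B).smul_mem c hx

lemma two_smul_add_self (X : M4) : (2:F3) • (X + X) = X := by
  rw [smul_add, ← add_smul, show ((2:F3)+2) = 1 by decide, one_smul]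

lemma C1 (B : M4) (i j : Fin 4) (hij : i ≠ j) :
    (E i j * B - B * E i j) ∈ Sspan B ∧ (B j i • E i j) ∈ Sspan B := by
  have hEE := E_mul_E_self i j hij
  have hmul1 : ((1:M4) + E i j) * ((1:M4) - E i j) = 1 := by
    have h : ((1:M4) + E i j) * ((1:M4) - E i j) = 1 - E i j * E i j := by noncomm_ring
    rw [h, hEE, sub_zero]
  have hmul2 : ((1:M4) - E i j) * ((1:M4) + E i j) = 1 := by
    have h : ((1:M4) - E i j) * ((1:M4) + E i j) = 1 - E i j * E i j := by noncomm_ring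
    rw [h, hEE, sub_zero]
  set u : SL4 := ⟨1 + E i j, det_one_add_E i j hij⟩ with hu
  set u' : SL4 := ⟨1 - E i j, det_one_sub_E i j hij⟩ with hu'
  have huinv : ((u⁻¹:SL4) : M4) = 1 - E i j := SL_inv_val u _ hmul1 (det_one_sub_E i j hij)
  have huinv' : ((u'⁻¹:SL4) : M4) = 1 + E i j := SL_inv_val u' _ hmul2 (det_one_add_E i j hij)
  have hXp : ((1:M4) + E i j) * B * ((1:M4) - E i j) ∈ Sspan B := by
    have h := conj_mem_Sspan B u
    rw [huinv] at h; exact h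
  have hXm : ((1:M4) - E i j) * B * ((1:M4) + E i j) ∈ Sspan B := by
    have h := conj_mem_Sspan B u'
    rw [huinv'] at h; exact h
  constructor
  · have hid : ((1:M4) + E i j) * B * ((1:M4) - E i j) - ((1:M4) - E i j) * B * ((1:M4) + E i j)
        = (E i j * B - B * E i j) + (E i j * B - B * E i j) := by noncomm_ring
    have h : (E i j * B - B * E i j)
        = (2:F3) • (((1:M4) + E i j) * B * ((1:M4) - E i j) - ((1:M4) - E i j) * B * ((1:M4) + E i j)) := by
      rw [hid, two_smul_add_self]
    rw [h]
    exact (Sspan B).smul_mem _ ((Sspan B).sub_mem hXp hXm)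
  · have hid : B + B - (((1:M4) + E i j) * B * ((1:M4) - E i j) + ((1:M4) - E i j) * B * ((1:M4) + E i j))
        = (E i j * B * E i j) + (E i j * B * E i j) := by noncomm_ring
    have hD : (E i j * B * E i j)
        = (2:F3) • (B + B - (((1:M4) + E i j) * B * ((1:M4) - E i j) + ((1:M4) - E i j) * B * ((1:M4) + E i j))) := by
      rw [hid, two_smul_add_self]
    have hmem : (E i j * B * E i j) ∈ Sspan B := by
      rw [hD]
      exact (Sspan B).smul_mem _ ((Sspan B).sub_mem
        ((Sspan B).add_mem (self_mem_Sspan B) (self_mem_Sspan B)) ((Sspan B).add_mem hXp hXm))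
    rwa [EBE] at hmem

lemma C2 (B : M4) (hns : ∀ c : F3, B ≠ c • 1) : ∃ i j : Fin 4, i ≠ j ∧ E i j ∈ Sspan B := by
  by_cases hod : ∃ i j : Fin 4, i ≠ j ∧ B j i ≠ 0
  · obtain ⟨i, j, hij, hB⟩ := hod
    refine ⟨i, j, hij, ?_⟩
    have h := (C1 B i j hij).2
    have h2 := (Sspan B).smul_mem (B j i)⁻¹ h
    rwa [smul_smul, inv_mul_cancel₀ hB, one_smul] at h2
  · push_neg at hod
    have hoff : ∀ a b : Fin 4, a ≠ b → B a b = 0 := by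
      intro a b hab
      exact hod b a (Ne.symm hab)
    have hdiag : ∃ i : Fin 4, B i i ≠ B 0 0 := by
      by_contra hd
      push_neg at hd
      apply hns (B 0 0)
      ext a b
      rcases eq_or_ne a b with rfl | hab
      · simp [Matrix.one_apply, hd a]
      · simp [Matrix.one_apply, hab, hoff a b hab]
    obtain ⟨i, hi⟩ := hdiag
    have hi0 : i ≠ 0 := by rintro rfl; exact hi rfl
    refine ⟨i, 0, hi0, ?_⟩
    have h := (C1 B i 0 hi0).1
    rw [EcommB_diag i B hoff] at h
    have h2 := (Sspan B).smul_mem (B 0 0 - B i i)⁻¹ h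
    rwa [smul_smul, inv_mul_cancel₀ (sub_ne_zero.mpr (Ne.symm hi)), one_smul] at h2

lemma conj_to_E21 (B X : M4) (hX : X ∈ Sspan B) (g gi : M4) (hdet : g.det = 1)
    (hgi : g * gi = 1) (h : g * X * gi = E 2 1) : E 2 1 ∈ Sspan B := by
  have hdetgi : gi.det = 1 := by
    have h2 := congrArg Matrix.det hgi
    rw [Matrix.det_mul, hdet, one_mul, Matrix.det_one] at h2
    exact h2
  set x : SL4 := ⟨g, hdet⟩ with hx
  have hxinv : ((x⁻¹:SL4):M4) = gi := SL_inv_val x gi hgi hdetgi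
  have hmem := Sspan_conj_inv B X hX x
  rw [hxinv] at hmem
  have hcoe : (x : M4) = g := rfl
  rw [hcoe, h] at hmem
  exact hmem

lemma E21_mem (B : M4) (i j : Fin 4) (hij : i ≠ j) (hE : E i j ∈ Sspan B) :
    E 2 1 ∈ Sspan B := by
  fin_cases i <;> fin_cases j
  · exact absurd rfl hij
  · exact conj_to_E21 B _ hE !![0, 0, 2, 0; 0, 1, 0, 0; 1, 0, 0, 0; 0, 0, 0, 1] !![0, 0, 1, 0; 0, 1, 0, 0; 2, 0, 0, 0; 0, 0, 0, 1] (by decide) (by decide) (by decide)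
  · exact conj_to_E21 B _ hE !![0, 1, 0, 0; 0, 0, 1, 0; 1, 0, 0, 0; 0, 0, 0, 1] !![0, 0, 1, 0; 1, 0, 0, 0; 0, 1, 0, 0; 0, 0, 0, 1] (by decide) (by decide) (by decide)
  · exact conj_to_E21 B _ hE !![0, 2, 0, 0; 0, 0, 0, 1; 1, 0, 0, 0; 0, 0, 1, 0] !![0, 0, 1, 0; 2, 0, 0, 0; 0, 0, 0, 1; 0, 1, 0, 0] (by decide) (by decide) (by decide)
  · exact conj_to_E21 B _ hE !![0, 0, 1, 0; 1, 0, 0, 0; 0, 1, 0, 0; 0, 0, 0, 1] !![0, 1, 0, 0; 0, 0, 1, 0; 1, 0, 0, 0; 0, 0, 0, 1] (by decide) (by decide) (by decide)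
  · exact absurd rfl hij
  · exact conj_to_E21 B _ hE !![2, 0, 0, 0; 0, 0, 1, 0; 0, 1, 0, 0; 0, 0, 0, 1] !![2, 0, 0, 0; 0, 0, 1, 0; 0, 1, 0, 0; 0, 0, 0, 1] (by decide) (by decide) (by decide)
  · exact conj_to_E21 B _ hE !![1, 0, 0, 0; 0, 0, 0, 1; 0, 1, 0, 0; 0, 0, 1, 0] !![1, 0, 0, 0; 0, 0, 1, 0; 0, 0, 0, 1; 0, 1, 0, 0] (by decide) (by decide) (by decide)
  · exact conj_to_E21 B _ hE !![0, 2, 0, 0; 1, 0, 0, 0; 0, 0, 1, 0; 0, 0, 0, 1] !![0, 1, 0, 0; 2, 0, 0, 0; 0, 0, 1, 0; 0, 0, 0, 1] (by decide) (by decide) (by decide)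
  · exact conj_to_E21 B _ hE !![1, 0, 0, 0; 0, 1, 0, 0; 0, 0, 1, 0; 0, 0, 0, 1] !![1, 0, 0, 0; 0, 1, 0, 0; 0, 0, 1, 0; 0, 0, 0, 1] (by decide) (by decide) (by decide)
  · exact absurd rfl hij
  · exact conj_to_E21 B _ hE !![2, 0, 0, 0; 0, 0, 0, 1; 0, 0, 1, 0; 0, 1, 0, 0] !![2, 0, 0, 0; 0, 0, 0, 1; 0, 0, 1, 0; 0, 1, 0, 0] (by decide) (by decide) (by decide)
  · exact conj_to_E21 B _ hE !![0, 1, 0, 0; 1, 0, 0, 0; 0, 0, 0, 1; 0, 0, 1, 0] !![0, 1, 0, 0; 1, 0, 0, 0; 0, 0, 0, 1; 0, 0, 1, 0] (by decide) (by decide) (by decide)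
  · exact conj_to_E21 B _ hE !![2, 0, 0, 0; 0, 1, 0, 0; 0, 0, 0, 1; 0, 0, 1, 0] !![2, 0, 0, 0; 0, 1, 0, 0; 0, 0, 0, 1; 0, 0, 1, 0] (by decide) (by decide) (by decide)
  · exact conj_to_E21 B _ hE !![1, 0, 0, 0; 0, 0, 1, 0; 0, 0, 0, 1; 0, 1, 0, 0] !![1, 0, 0, 0; 0, 0, 0, 1; 0, 1, 0, 0; 0, 0, 1, 0] (by decide) (by decide) (by decide)
  · exact absurd rfl hij
lemma C4 (A' B : M4) (hA10 : A' 1 0 = 1) (hBns : ∀ c : F3, B ≠ c • 1) :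
    ∃ h : SL4, (A' * ((h:M4) * B * ((h⁻¹:SL4):M4)) - ((h:M4) * B * ((h⁻¹:SL4):M4)) * A') 2 0 ≠ 0 := by
  by_contra hall
  push_neg at hall
  have hphi : ∀ X ∈ Sspan B, (A' * X - X * A') 2 0 = 0 := by
    intro X hX
    induction hX using Submodule.span_induction with
    | mem x hx =>
        obtain ⟨k, rfl⟩ := hx
        exact hall k
    | zero => simp
    | add x y _ _ hx hy =>
        have h : A' * (x + y) - (x + y) * A' = (A' * x - x * A') + (A' * y - y * A') := by
          noncomm_ring
        rw [h, Matrix.add_apply, hx, hy, add_zero]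
    | smul c x _ hx =>
        have h : A' * (c • x) - (c • x) * A' = c • (A' * x - x * A') := by
          rw [mul_smul_comm, smul_mul_assoc, smul_sub]
        rw [h, Matrix.smul_apply, hx, smul_zero]
  obtain ⟨i, j, hij, hEij⟩ := C2 B hBns
  have hE21 := E21_mem B i j hij hEij
  have hc := hphi _ hE21
  rw [Matrix.sub_apply, mul_E_apply, E_mul_apply] at hc
  simp [hA10] at hc

lemma det_one_add_smul_E02 (t : F3) : ((1:M4) + t • E 0 2).det = 1 := by
  rw [det4_eq]
  simp [det4, Matrix.add_apply, Matrix.one_apply, Matrix.smul_apply, E, Matrix.single]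

lemma det_one_sub_smul_E02 (t : F3) : ((1:M4) - t • E 0 2).det = 1 := by
  rw [det4_eq]
  simp [det4, Matrix.sub_apply, Matrix.one_apply, Matrix.smul_apply, E, Matrix.single]

lemma one_add_mul_one_sub (U : M4) (hUU : U * U = 0) : ((1:M4) + U) * ((1:M4) - U) = 1 := by
  have h : ((1:M4) + U) * ((1:M4) - U) = 1 - U * U := by noncomm_ring
  rw [h, hUU, sub_zero]

lemma smul_E02_sq (t : F3) : (t • E 0 2) * (t • E 0 2) = 0 := by
  rw [smul_mul_assoc, mul_smul_comm, E02_mul_E02]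
  simp

lemma one_add_smul_E02_mul (t : F3) : ((1:M4) + t • E 0 2) * ((1:M4) - t • E 0 2) = 1 :=
  one_add_mul_one_sub _ (smul_E02_sq t)

lemma trace_formula (A' X : M4) (t : F3) (hA20 : A' 2 0 = 0) :
    (((1 + t • E 0 2) * A' * (1 - t • E 0 2)) * X).trace
      = (A' * X).trace + t * ((A' * X - X * A') 2 0) := by
  set U : M4 := t • E 0 2 with hU
  have hexp : ((1 + U) * A' * (1 - U)) * X
      = A' * X + U * (A' * X) - A' * U * X - U * A' * U * X := by noncomm_ring
  have hUAU : U * A' * U = 0 := by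
    rw [hU, smul_mul_assoc, smul_mul_assoc, mul_smul_comm, EBE, hA20]
    simp
  have htr1 : (U * (A' * X)).trace = t * ((A' * X) 2 0) := by
    rw [hU, smul_mul_assoc, trace_smul, trace_E02_mul]
    rfl
  have htr2 : (A' * U * X).trace = t * ((X * A') 2 0) := by
    rw [Matrix.trace_mul_cycle, Matrix.trace_mul_comm, hU,
      smul_mul_assoc, trace_smul, trace_E02_mul]
    rfl
  rw [hexp, hUAU]
  rw [trace_sub, trace_sub, trace_add, htr1, htr2]
  rw [Matrix.sub_apply]
  simp
  ring

lemma exists_noneigen (A : M4) (hns : ∀ c : F3, A ≠ c • 1) :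
    ∃ v : Fin 4 → F3, ∀ c : F3, A.mulVec v ≠ c • v := by
  by_contra h
  push_neg at h
  choose c hc using h
  have hsame : ∀ j : Fin 4, c ((Pi.single (j:Fin 4) (1:F3) : Fin 4 → F3)) = c ((Pi.single (0:Fin 4) (1:F3) : Fin 4 → F3)) := by
    intro j
    rcases eq_or_ne j 0 with rfl | hj
    · rfl
    · have h1 := hc (((Pi.single (0:Fin 4) (1:F3) : Fin 4 → F3)) + ((Pi.single (j:Fin 4) (1:F3) : Fin 4 → F3)))
      rw [Matrix.mulVec_add, hc ((Pi.single (0:Fin 4) (1:F3) : Fin 4 → F3)), hc ((Pi.single (j:Fin 4) (1:F3) : Fin 4 → F3))] at h1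
      have h2 := congrFun h1 0
      have h3 := congrFun h1 j
      simp only [Pi.add_apply, Pi.smul_apply, smul_eq_mul] at h2 h3
      rw [Pi.single_eq_same, Pi.single_eq_of_ne (Ne.symm hj)] at h2
      rw [Pi.single_eq_same, Pi.single_eq_of_ne hj] at h3
      linear_combination h3 - h2
  apply hns (c ((Pi.single (0:Fin 4) (1:F3) : Fin 4 → F3)))
  ext i j
  have hcol := congrFun (hc ((Pi.single (j:Fin 4) (1:F3) : Fin 4 → F3))) i
  simp only [Matrix.mulVec_single, Matrix.col_apply, op_smul_eq_mul, Pi.smul_apply, smul_eq_mul, mul_one] at hcol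
  rw [hcol, hsame j]
  rcases eq_or_ne i j with rfl | hij
  · simp [Matrix.one_apply]
  · simp [Matrix.one_apply, hij, Pi.single_eq_of_ne (Ne.symm hij)]

lemma R1aux (A : M4) (v w : Fin 4 → F3) (hw : A.mulVec v = w) (P : M4)
    (h0 : ∀ i, P i 0 = v i) (h1 : ∀ i, P i 1 = w i) (hdet : P.det ≠ 0) :
    ∃ g : SL4, ((g:M4) * A * ((g⁻¹:SL4):M4)) 1 0 = 1
      ∧ ((g:M4) * A * ((g⁻¹:SL4):M4)) 2 0 = 0 := by
  set P' : M4 := P * Matrix.diagonal ![1, 1, 1, (P.det)⁻¹] with hP'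
  have hdet' : P'.det = 1 := by
    rw [hP', Matrix.det_mul, Matrix.det_diagonal, Fin.prod_univ_four]
    simp [mul_inv_cancel₀ hdet]
  have hP'0 : ∀ i, P' i 0 = v i := by
    intro i; rw [hP', Matrix.mul_diagonal]
    simp [h0]
  have hP'1 : ∀ i, P' i 1 = w i := by
    intro i; rw [hP', Matrix.mul_diagonal]
    simp [h1]
  set x : SL4 := ⟨P', hdet'⟩ with hx
  refine ⟨x⁻¹, ?_, ?_⟩ <;>
  · have hginv : (((x⁻¹)⁻¹ : SL4) : M4) = P' := by rw [inv_inv]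
    have hgP : ((x⁻¹ : SL4) : M4) * P' = 1 := by
      have h2 : ((x⁻¹ * x : SL4) : M4) = ((1 : SL4) : M4) := by rw [inv_mul_cancel]
      rwa [Matrix.SpecialLinearGroup.coe_mul, Matrix.SpecialLinearGroup.coe_one] at h2
    have hcolAP : ∀ k, (A * P') k 0 = w k := by
      intro k
      rw [Matrix.mul_apply, ← hw]
      simp only [Matrix.mulVec, dotProduct]
      exact Finset.sum_congr rfl fun m _ => by rw [hP'0 m]
    have hstep : ∀ i, (((x⁻¹ : SL4) : M4) * A * P') i 0 = (((x⁻¹ : SL4) : M4) * P') i 1 := by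
      intro i
      rw [Matrix.mul_assoc, Matrix.mul_apply, Matrix.mul_apply]
      exact Finset.sum_congr rfl fun k _ => by rw [hcolAP k, hP'1 k]
    rw [hginv, hstep, hgP]
    simp [Matrix.one_apply]

lemma R1 (A : M4) (hns : ∀ c : F3, A ≠ c • 1) :
    ∃ g : SL4, ((g:M4) * A * ((g⁻¹:SL4):M4)) 1 0 = 1
      ∧ ((g:M4) * A * ((g⁻¹:SL4):M4)) 2 0 = 0 := by
  obtain ⟨v, hv⟩ := exists_noneigen A hns
  set w : Fin 4 → F3 := A.mulVec v with hwdef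
  have hind : ∀ c d : F3,
      (c*(v 0) + d*(w 0) = 0 ∧ c*(v 1) + d*(w 1) = 0 ∧ c*(v 2) + d*(w 2) = 0 ∧ c*(v 3) + d*(w 3) = 0)
      → c = 0 ∧ d = 0 := by
    intro c d h
    have hvec : c • v + d • w = 0 := by
      funext i
      fin_cases i <;>
        simp only [Pi.add_apply, Pi.smul_apply, smul_eq_mul, Pi.zero_apply] <;>
        [exact h.1; exact h.2.1; exact h.2.2.1; exact h.2.2.2]
    by_cases hd : d = 0
    · subst hd
      refine ⟨?_, rfl⟩
      by_contra hc
      rw [zero_smul, add_zero] at hvec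
      rcases smul_eq_zero.mp hvec with hc0 | hv0
      · exact hc hc0
      · apply hv 0
        rw [hwdef, hv0]
        simp
    · exfalso
      have hdw : d • w = -(c • v) := eq_neg_of_add_eq_zero_right hvec
      have hfin : w = (-(d⁻¹ * c)) • v := by
        calc w = d⁻¹ • (d • w) := (inv_smul_smul₀ hd w).symm
          _ = d⁻¹ • (-(c • v)) := by rw [hdw]
          _ = (-(d⁻¹ * c)) • v := by rw [smul_neg, smul_smul, neg_smul]
      exact hv (-(d⁻¹ * c)) (hwdef ▸ hfin)
  rcases L_D1s (v 0) (v 1) (v 2) (v 3) (w 0) (w 1) (w 2) (w 3) hind with hm | hm | hm | hm | hm | hm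
  · have hd4 : det4 (colsM v w 2 3) = v 0 * w 1 - v 1 * w 0 := by simp [det4, colsM]; ring
    exact R1aux A v w hwdef.symm (colsM v w 2 3) (fun i => by simp [colsM])
      (fun i => by simp [colsM]) (by rw [det4_eq, hd4]; exact hm)
  · have hd4 : det4 (colsM v w 3 1) = v 0 * w 2 - v 2 * w 0 := by simp [det4, colsM]; ring
    exact R1aux A v w hwdef.symm (colsM v w 3 1) (fun i => by simp [colsM])
      (fun i => by simp [colsM]) (by rw [det4_eq, hd4]; exact hm)
  · have hd4 : det4 (colsM v w 1 2) = v 0 * w 3 - v 3 * w 0 := by simp [det4, colsM]; ring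
    exact R1aux A v w hwdef.symm (colsM v w 1 2) (fun i => by simp [colsM])
      (fun i => by simp [colsM]) (by rw [det4_eq, hd4]; exact hm)
  · have hd4 : det4 (colsM v w 0 3) = v 1 * w 2 - v 2 * w 1 := by simp [det4, colsM]; ring
    exact R1aux A v w hwdef.symm (colsM v w 0 3) (fun i => by simp [colsM])
      (fun i => by simp [colsM]) (by rw [det4_eq, hd4]; exact hm)
  · have hd4 : det4 (colsM v w 2 0) = v 1 * w 3 - v 3 * w 1 := by simp [det4, colsM]; ring
    exact R1aux A v w hwdef.symm (colsM v w 2 0) (fun i => by simp [colsM])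
      (fun i => by simp [colsM]) (by rw [det4_eq, hd4]; exact hm)
  · have hd4 : det4 (colsM v w 0 1) = v 2 * w 3 - v 3 * w 2 := by simp [det4, colsM]; ring
    exact R1aux A v w hwdef.symm (colsM v w 0 1) (fun i => by simp [colsM])
      (fun i => by simp [colsM]) (by rw [det4_eq, hd4]; exact hm)
set_option maxHeartbeats 1000000 in
lemma main_exists (A0 B0 : SL4) (hAns : ∀ c : F3, (A0:M4) ≠ c • 1)
    (hBns : ∀ c : F3, (B0:M4) ≠ c • 1) (τ : F3) :
    ∃ g h : SL4, (((g * A0 * g⁻¹ : SL4) : M4) * ((h * B0 * h⁻¹ : SL4) : M4)).trace = τ := by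
  obtain ⟨g₀, hA10, hA20⟩ := R1 (A0:M4) hAns
  set A' : M4 := (g₀:M4) * (A0:M4) * ((g₀⁻¹:SL4):M4) with hA'
  obtain ⟨h, hδ⟩ := C4 A' (B0:M4) hA10 hBns
  set B' : M4 := (h:M4) * (B0:M4) * ((h⁻¹:SL4):M4) with hB'
  set δ : F3 := (A' * B' - B' * A') 2 0 with hδdef
  set t : F3 := (τ - (A' * B').trace) * δ⁻¹ with ht
  have hdet : ((1:M4) + t • E 0 2).det = 1 := det_one_add_smul_E02 t
  set gt : SL4 := ⟨1 + t • E 0 2, hdet⟩ with hgt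
  have hgtinv : ((gt⁻¹:SL4):M4) = 1 - t • E 0 2 :=
    SL_inv_val gt _ (one_add_smul_E02_mul t) (det_one_sub_smul_E02 t)
  refine ⟨gt * g₀, h, ?_⟩
  have hcoe : ((gt * g₀ * A0 * (gt * g₀)⁻¹ : SL4) : M4)
      = ((1:M4) + t • E 0 2) * A' * ((1:M4) - t • E 0 2) := by
    rw [_root_.mul_inv_rev]
    simp only [Matrix.SpecialLinearGroup.coe_mul]
    rw [hA', ← hgtinv]
    rw [show ((gt:SL4):M4) = 1 + t • E 0 2 from rfl]
    simp only [Matrix.mul_assoc]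
  have hcoeB : ((h * B0 * h⁻¹ : SL4):M4) = B' := by
    rw [hB']
    simp only [Matrix.SpecialLinearGroup.coe_mul]
  rw [hcoe, hcoeB, trace_formula A' B' t hA20]
  rw [← hδdef, ht]
  have harith : ∀ x : F3, x + (τ - x) * δ⁻¹ * δ = τ := by
    intro x
    rw [mul_assoc, inv_mul_cancel₀ hδ, mul_one]
    ring
  exact harith _

/-- **Lemma.** Let `Ω`, `Ψ` be nonscalar conjugacy classes of `SL(4,3)`, the group of
`4 × 4` matrices of determinant `1` over the field `GF(3) = ZMod 3`.  Then the set of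
traces of products `ωψ` is all of `GF(3)`. -/
theorem trace_product_conjugacy_classes_SL4_GF3
    (Ω Ψ : Set (Matrix.SpecialLinearGroup (Fin 4) (ZMod 3)))
    (hΩclass : ∃ A : Matrix.SpecialLinearGroup (Fin 4) (ZMod 3),
      Ω = {B | ∃ g : Matrix.SpecialLinearGroup (Fin 4) (ZMod 3), g * A * g⁻¹ = B})
    (hΨclass : ∃ A : Matrix.SpecialLinearGroup (Fin 4) (ZMod 3),
      Ψ = {B | ∃ g : Matrix.SpecialLinearGroup (Fin 4) (ZMod 3), g * A * g⁻¹ = B})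
    (hΩns : ∀ ω ∈ Ω, ∀ c : ZMod 3, (ω : Matrix (Fin 4) (Fin 4) (ZMod 3)) ≠ c • 1)
    (hΨns : ∀ ψ ∈ Ψ, ∀ c : ZMod 3, (ψ : Matrix (Fin 4) (Fin 4) (ZMod 3)) ≠ c • 1) :
    {τ : ZMod 3 | ∃ ω ∈ Ω, ∃ ψ ∈ Ψ,
      ((ω : Matrix (Fin 4) (Fin 4) (ZMod 3)) * (ψ : Matrix (Fin 4) (Fin 4) (ZMod 3))).trace = τ} =
      Set.univ := by
  obtain ⟨A0, hΩ⟩ := hΩclass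
  obtain ⟨B0, hΨ⟩ := hΨclass
  have hA0mem : A0 ∈ Ω := by
    rw [hΩ]; exact ⟨1, by rw [inv_one, mul_one, one_mul]⟩
  have hB0mem : B0 ∈ Ψ := by
    rw [hΨ]; exact ⟨1, by rw [inv_one, mul_one, one_mul]⟩
  have hAns := hΩns A0 hA0mem
  have hBns := hΨns B0 hB0mem
  ext τ
  simp only [Set.mem_setOf_eq, Set.mem_univ, iff_true]
  obtain ⟨g, h, htr⟩ := main_exists A0 B0 hAns hBns τ
  refine ⟨g * A0 * g⁻¹, ?_, h * B0 * h⁻¹, ?_, htr⟩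
  · rw [hΩ]; exact ⟨g, rfl⟩
  · rw [hΨ]; exact ⟨h, rfl⟩
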